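/- Let a_n be defined by a_1 = 1, a_2 = 2, and a_n = n·a_{n-1} + ∑_{j=2}^{n-2} (-1)^{j-1} C(n-2, j) a_{n-j} for n ≥ 3. Then a_n = ∑_{k=1}^{n-1} 2^k S(n-1, k) for all n ≥ 2, i.e., a_n = e^{-2} ∑_{k≥1} 2^k k^{n-1}/k!. -/

import Mathlib

open Finset

/-- Stirling numbers of the second kind. -/
def stirling2 : ℕ → ℕ → ℕ
  | 0, 0 => 1
  | 0, _ + 1 => 0
  | _ + 1, 0 => 0
  | n + 1, k + 1 => (k + 1) * stirling2 n (k + 1) + stirling2 n k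

lemma stirling2_zero (n : ℕ) : stirling2 (n+1) 0 = 0 := rfl

lemma stirling2_eq_zero : ∀ n k : ℕ, n < k → stirling2 n k = 0 := by
  intro n
  induction n with
  | zero =>
    intro k h
    cases k with
    | zero => omega
    | succ k => rfl
  | succ n ih =>
    intro k h
    cases k with
    | zero => omega
    | succ k =>
      show (k + 1) * stirling2 n (k + 1) + stirling2 n k = 0
      rw [ih (k+1) (by omega), ih k (by omega)]
      ring

lemma choose_swap (m i j : ℕ) :
    Nat.choose m j * Nat.choose (m-j) i = Nat.choose m i * Nat.choose (m-i) j := by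
  rcases le_or_gt (j + i) m with h | h
  · have h1 := Nat.choose_mul (n := m) (Nat.le_add_right j i)
    have h2 := Nat.choose_mul (n := m) (Nat.le_add_right i j)
    simp only [Nat.add_sub_cancel_left] at h1 h2
    have h3 : Nat.choose (i+j) j = Nat.choose (i+j) i := by
      have := Nat.choose_symm (Nat.le_add_right i j)
      rwa [Nat.add_sub_cancel_left] at this
    rw [Nat.add_comm j i, h3] at h1
    omega
  · rcases le_or_gt j m with hj | hj
    · rcases le_or_gt i m with hi | hi
      · rw [Nat.choose_eq_zero_of_lt (show m - j < i by omega),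
          Nat.choose_eq_zero_of_lt (show m - i < j by omega)]
        ring
      · rw [Nat.choose_eq_zero_of_lt (show m - j < i by omega),
          Nat.choose_eq_zero_of_lt (show m < i by omega)]
        ring
    · rw [Nat.choose_eq_zero_of_lt (show m < j by omega),
        Nat.choose_eq_zero_of_lt (show m - i < j by omega)]
      ring

lemma stirling2_succ_succ (n k : ℕ) :
    stirling2 (n+1) (k+1) = ∑ j ∈ range (n+1), Nat.choose n j * stirling2 j k := by
  induction n generalizing k with
  | zero =>
    show (k + 1) * stirling2 0 (k + 1) + stirling2 0 k = _
    rw [stirling2_eq_zero 0 (k+1) (by omega)]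
    simp
  | succ n ih =>
    have hsplit : ∑ j ∈ range (n+1), Nat.choose (n+1) (j+1) * stirling2 (j+1) k
        = (∑ j ∈ range (n+1), Nat.choose n j * stirling2 (j+1) k)
          + ∑ j ∈ range (n+1), Nat.choose n (j+1) * stirling2 (j+1) k := by
      rw [← Finset.sum_add_distrib]
      exact Finset.sum_congr rfl fun j _ => by rw [Nat.choose_succ_succ n j, Nat.add_mul]
    have tail : (∑ j ∈ range (n+1), Nat.choose n (j+1) * stirling2 (j+1) k)
        + Nat.choose (n+1) 0 * stirling2 0 k = stirling2 (n+1) (k+1) := by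
      have e1 : ∑ j ∈ range (n+2), Nat.choose n j * stirling2 j k
          = (∑ j ∈ range (n+1), Nat.choose n (j+1) * stirling2 (j+1) k)
            + Nat.choose n 0 * stirling2 0 k :=
        Finset.sum_range_succ' _ (n+1)
      have e2 : ∑ j ∈ range (n+2), Nat.choose n j * stirling2 j k
          = ∑ j ∈ range (n+1), Nat.choose n j * stirling2 j k := by
        rw [Finset.sum_range_succ, Nat.choose_eq_zero_of_lt (by omega)]
        ring
      rw [ih k]
      simp only [Nat.choose_zero_right] at e1 ⊢
      omega
    rw [Finset.sum_range_succ' (fun j => Nat.choose (n+1) j * stirling2 j k) (n+1), hsplit]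
    cases k with
    | zero =>
      have hz : ∑ j ∈ range (n+1), Nat.choose n j * stirling2 (j+1) 0 = 0 := by
        apply Finset.sum_eq_zero
        intro j _
        rw [stirling2_zero]; ring
      rw [hz, show stirling2 (n+(1+1)) 1
          = (0+1) * stirling2 (n+1) (0+1) + stirling2 (n+1) 0 from rfl,
        stirling2_zero, ← tail]
      ring
    | succ k =>
      have hA : ∑ j ∈ range (n+1), Nat.choose n j * stirling2 (j+1) (k+1)
          = (k+1) * stirling2 (n+1) (k+1+1) + stirling2 (n+1) (k+1) := by
        have hp : ∀ j, Nat.choose n j * stirling2 (j+1) (k+1)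
            = (k+1) * (Nat.choose n j * stirling2 j (k+1)) + Nat.choose n j * stirling2 j k := by
          intro j
          show Nat.choose n j * ((k + 1) * stirling2 j (k + 1) + stirling2 j k) = _
          ring
        rw [Finset.sum_congr rfl fun j _ => hp j, Finset.sum_add_distrib,
          ← Finset.mul_sum, ← ih (k+1), ← ih k]
      rw [hA, show stirling2 (n+(1+1)) (k+1+1)
          = (k+1+1) * stirling2 (n+1) (k+1+1) + stirling2 (n+1) (k+1) from rfl, ← tail]
      ring

def bseq (n : ℕ) : ℤ := ∑ k ∈ range (n+1), 2^k * (stirling2 n k : ℤ)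

lemma bseq_succ (m : ℕ) :
    bseq (m+1) = 2 * ∑ j ∈ range (m+1), (Nat.choose m j : ℤ) * bseq j := by
  have hb : ∀ j ∈ range (m+1),
      ∑ k ∈ range (m+1), (2:ℤ)^k * (stirling2 j k : ℤ) = bseq j := by
    intro j hj
    rw [Finset.mem_range] at hj
    unfold bseq
    symm
    apply Finset.sum_subset (Finset.range_subset_range.mpr (by omega))
    intro k _ hk
    rw [Finset.mem_range, not_lt] at hk
    rw [stirling2_eq_zero j k (by omega)]
    simp
  show ∑ k ∈ range (m+1+1), (2:ℤ)^k * (stirling2 (m+1) k : ℤ) = _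
  rw [Finset.sum_range_succ']
  have h0 : (2:ℤ)^0 * (stirling2 (m+1) 0 : ℤ) = 0 := by rw [stirling2_zero]; simp
  rw [h0, add_zero]
  have hs : ∀ k, ((stirling2 (m+1) (k+1) : ℤ))
      = ∑ j ∈ range (m+1), (Nat.choose m j : ℤ) * (stirling2 j k : ℤ) := by
    intro k
    rw [stirling2_succ_succ]
    push_cast
    rfl
  calc ∑ k ∈ range (m+1), (2:ℤ)^(k+1) * (stirling2 (m+1) (k+1):ℤ)
      = ∑ k ∈ range (m+1), ∑ j ∈ range (m+1),
          (2:ℤ)^(k+1) * ((Nat.choose m j : ℤ) * (stirling2 j k:ℤ)) := by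
        refine Finset.sum_congr rfl fun k _ => ?_
        rw [hs k, Finset.mul_sum]
    _ = ∑ j ∈ range (m+1), ∑ k ∈ range (m+1),
          (2:ℤ)^(k+1) * ((Nat.choose m j:ℤ) * (stirling2 j k:ℤ)) := Finset.sum_comm
    _ = ∑ j ∈ range (m+1), (Nat.choose m j:ℤ)
          * (2 * ∑ k ∈ range (m+1), (2:ℤ)^k * (stirling2 j k:ℤ)) := by
        refine Finset.sum_congr rfl fun j _ => ?_
        rw [Finset.mul_sum, Finset.mul_sum]
        refine Finset.sum_congr rfl fun k _ => ?_
        ring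
    _ = 2 * ∑ j ∈ range (m+1), (Nat.choose m j:ℤ) * bseq j := by
        rw [Finset.mul_sum]
        refine Finset.sum_congr rfl fun j hj => ?_
        rw [hb j hj]
        ring

lemma bseq_inv (m : ℕ) :
    ∑ j ∈ range (m+1), (-1:ℤ)^j * (Nat.choose m j : ℤ) * bseq (m+1-j) = 2 * bseq m := by
  have step1 : ∀ j ∈ range (m+1),
      bseq (m+1-j) = 2 * ∑ i ∈ range (m+1), (Nat.choose (m-j) i : ℤ) * bseq i := by
    intro j hj
    rw [Finset.mem_range] at hj
    have hmj : m + 1 - j = (m - j) + 1 := by omega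
    rw [hmj, bseq_succ]
    congr 1
    apply Finset.sum_subset (Finset.range_subset_range.mpr (by omega))
    intro i _ hi
    rw [Finset.mem_range, not_lt] at hi
    rw [Nat.choose_eq_zero_of_lt (show m - j < i by omega)]
    simp
  calc ∑ j ∈ range (m+1), (-1:ℤ)^j * (Nat.choose m j : ℤ) * bseq (m+1-j)
      = ∑ j ∈ range (m+1), ∑ i ∈ range (m+1),
          (-1:ℤ)^j * 2 * ((Nat.choose m i : ℤ) * (Nat.choose (m-i) j : ℤ)) * bseq i := by
        refine Finset.sum_congr rfl fun j hj => ?_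
        rw [step1 j hj, Finset.mul_sum, Finset.mul_sum]
        refine Finset.sum_congr rfl fun i _ => ?_
        have hsw : (Nat.choose m j : ℤ) * (Nat.choose (m-j) i : ℤ)
            = (Nat.choose m i : ℤ) * (Nat.choose (m-i) j : ℤ) := by
          exact_mod_cast congrArg (Nat.cast : ℕ → ℤ) (choose_swap m i j)
        linear_combination ((-1:ℤ)^j * 2 * bseq i) * hsw
    _ = ∑ i ∈ range (m+1), (2 * (Nat.choose m i : ℤ) * bseq i)
          * ∑ j ∈ range (m+1), (-1:ℤ)^j * (Nat.choose (m-i) j : ℤ) := by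
        rw [Finset.sum_comm]
        refine Finset.sum_congr rfl fun i _ => ?_
        rw [Finset.mul_sum]
        refine Finset.sum_congr rfl fun j _ => ?_
        ring
    _ = 2 * bseq m := by
        have halt : ∀ i ∈ range (m+1),
            ∑ j ∈ range (m+1), (-1:ℤ)^j * (Nat.choose (m-i) j : ℤ)
              = if m - i = 0 then 1 else 0 := by
          intro i hi
          rw [Finset.mem_range] at hi
          rw [← Int.alternating_sum_range_choose (n := m - i)]
          symm
          apply Finset.sum_subset (Finset.range_subset_range.mpr (by omega))
          intro j _ hjj
          rw [Finset.mem_range, not_lt] at hjj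
          rw [Nat.choose_eq_zero_of_lt (show m - i < j by omega)]
          simp
        rw [Finset.sum_congr rfl fun i hi => by rw [halt i hi]]
        rw [Finset.sum_eq_single m]
        · simp
        · intro i hi hne
          rw [Finset.mem_range] at hi
          rw [if_neg (by omega)]
          ring
        · intro h
          exact absurd (Finset.self_mem_range_succ m) h

theorem avoid_321_recurrence_solution (a : ℕ → ℤ) (h1 : a 1 = 1) (h2 : a 2 = 2)
    (hrec : ∀ n, 3 ≤ n →
      a n = n * a (n - 1) + ∑ j ∈ Finset.Icc 2 (n - 2),
        (-1) ^ (j - 1) * Nat.choose (n - 2) j * a (n - j)) :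
    ∀ n, 2 ≤ n →
      a n = ∑ k ∈ Finset.Icc 1 (n - 1), (2 : ℤ) ^ k * stirling2 (n - 1) k := by
  have key : ∀ m : ℕ, a (m+1) = bseq m := by
    intro m
    induction m using Nat.strong_induction_on with
    | _ m ih =>
      match m, ih with
      | 0, _ => rw [h1]; simp [bseq, stirling2]
      | 1, _ =>
        rw [h2]
        show (2:ℤ) = ∑ k ∈ range (1+1), 2^k * (stirling2 1 k : ℤ)
        rw [Finset.sum_range_succ, Finset.sum_range_one]
        norm_num [stirling2]
      | (t+2), ih =>
        have hr := hrec (t+2+1) (by omega)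
        rw [show t+2+1-1 = t+1+1 from by omega, show t+2+1-2 = t+1 from by omega] at hr
        rw [ih (t+1) (by omega)] at hr
        have hsum : ∑ j ∈ Finset.Icc 2 (t+1),
              (-1:ℤ)^(j-1) * (Nat.choose (t+1) j : ℤ) * a (t+2+1-j)
            = - ∑ j ∈ Finset.Icc 2 (t+1),
              (-1:ℤ)^j * (Nat.choose (t+1) j : ℤ) * bseq (t+1+1-j) := by
          rw [← Finset.sum_neg_distrib]
          refine Finset.sum_congr rfl fun j hj => ?_
          rw [Finset.mem_Icc] at hj
          have ha : a (t+2+1-j) = bseq (t+1+1-j) := by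
            have h' := ih (t+1+1-j) (by omega)
            rwa [show t+2+1-j = t+1+1-j+1 from by omega]
          have hj1 : (-1:ℤ)^j = (-1)^(j-1) * (-1) := by
            conv_lhs => rw [show j = j-1+1 from by omega]
            rw [pow_succ]
          rw [ha, hj1]
          ring
        rw [hsum] at hr
        have esplit : ∀ (G : ℕ → ℤ), ∑ j ∈ range (t+1+1), G j
            = G 0 + G 1 + ∑ j ∈ Finset.Icc 2 (t+1), G j := by
          intro G
          have h2' : Finset.Ico 2 (t+1+1) = Finset.Icc 2 (t+1) := by
            ext x; simp [Nat.lt_succ_iff]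
          rw [Finset.range_eq_Ico,
            ← Finset.sum_Ico_consecutive G (show 0 ≤ 2 by omega) (show 2 ≤ t+1+1 by omega),
            h2', ← Finset.range_eq_Ico]
          have h3 : ∑ j ∈ Finset.range 2, G j = G 0 + G 1 := by
            rw [show (2:ℕ) = 1+1 from rfl, Finset.sum_range_succ, Finset.sum_range_one]
          rw [h3]
        have hinv := bseq_inv (t+1)
        rw [esplit] at hinv
        have hG0 : (-1:ℤ)^0 * (Nat.choose (t+1) 0 : ℤ) * bseq (t+1+1-0) = bseq (t+2) := by
          norm_num
        have hG1 : (-1:ℤ)^1 * (Nat.choose (t+1) 1 : ℤ) * bseq (t+1+1-1)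
            = -((t:ℤ)+1) * bseq (t+1) := by
          norm_num
        rw [hG0, hG1] at hinv
        push_cast at hr
        linear_combination hr - hinv
  intro n hn
  obtain ⟨p, rfl⟩ : ∃ p, n = p + 2 := ⟨n - 2, by omega⟩
  rw [show p+2 = p+1+1 from rfl, key (p+1), show p+1+1-1 = p+1 from rfl]
  show bseq (p+1) = _
  unfold bseq
  symm
  apply Finset.sum_subset
  · intro k hk
    rw [Finset.mem_Icc] at hk
    rw [Finset.mem_range]
    omega
  · intro x hx hx2
    rw [Finset.mem_range] at hx
    rw [Finset.mem_Icc] at hx2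
    have hx0 : x = 0 := by omega
    subst hx0
    rw [stirling2_zero]
    simp
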